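/- Suppose F ⊆ C_p(HE) is a union of countably many path components K₁, K₂, … of C_p(HE), each K_n is closed in C_p(HE), and no sequence (g_n) with g_n ∈ K_n for all n has a uniformly convergent subsequence. Then F is closed in C_p(HE), and hence the corresponding set {[f₁], [f₂], …} is closed in π₁^top(HE,p). -/

import Mathlib

open unitInterval Filter Topology

noncomputable section

/-- The `n`-th circle of the Hawaiian earring: radius `1/n`, centre `(1/n, 0)`.
(For `n = 0` this degenerates to the single point `(0,0)` since `1/0 = 0` in Lean.) -/
def circ (n : ℕ) : Set (ℝ × ℝ) :=
  {x | (x.1 - 1 / n) ^ 2 + x.2 ^ 2 = (1 / n) ^ 2}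

/-- The Hawaiian earring as a subset of the plane. -/
def HEset : Set (ℝ × ℝ) := ⋃ n : ℕ, circ n

/-- The Hawaiian earring as a topological (metric) space. -/
abbrev HE : Type := ↥HEset

lemma origin_mem_circ (n : ℕ) : ((0, 0) : ℝ × ℝ) ∈ circ n := by
  simp [circ]

/-- The basepoint `p = (0,0)` of the Hawaiian earring. -/
def hep : HE := ⟨(0, 0), Set.mem_iUnion.2 ⟨1, origin_mem_circ 1⟩⟩

/-- The point `q = (2,0)` on the largest circle `X₁`, distinct from `p`. -/
def qpt : HE := ⟨(2, 0), Set.mem_iUnion.2 ⟨1, by norm_num [circ]⟩⟩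

/-- The standard parametrisation of the `i`-th circle, starting and ending at the origin. -/
def alphaFun (i : ℕ) (t : ℝ) : ℝ × ℝ :=
  ((1 / i) * (1 - Real.cos (2 * Real.pi * t)), (1 / i) * Real.sin (2 * Real.pi * t))

lemma alphaFun_mem (i : ℕ) (t : ℝ) : alphaFun i t ∈ HEset := by
  refine Set.mem_iUnion.2 ⟨i, ?_⟩
  have h := Real.sin_sq_add_cos_sq (2 * Real.pi * t)
  simp only [circ, alphaFun, Set.mem_setOf_eq]
  nlinarith [h]

/-- The loop `αᵢ` traversing the `i`-th circle of the Hawaiian earring once. -/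
def alpha (i : ℕ) : Path hep hep where
  toFun t := ⟨alphaFun i t, alphaFun_mem i t⟩
  continuous_toFun := by
    refine Continuous.subtype_mk ?_ _
    unfold alphaFun
    fun_prop
  source' := by
    ext : 1
    simp [alphaFun, hep]
  target' := by
    ext : 1
    simp [alphaFun, hep, Real.cos_two_pi, Real.sin_two_pi]

/-- `n`-fold concatenation of a loop with itself. -/
def loopPow {X : Type*} [TopologicalSpace X] {p : X} (γ : Path p p) : ℕ → Path p p
  | 0 => Path.refl p
  | n + 1 => (loopPow γ n).trans γ

/-- The commutator-power loops `fₙ = (α₁ * α_m * α₁⁻¹ * α_m⁻¹)ⁿ`. -/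
def fLoop (m n : ℕ) : Path hep hep :=
  loopPow ((((alpha 1).trans (alpha m)).trans (alpha 1).symm).trans (alpha m).symm) n

/-- `oscGE q g M` : there are `t₀ < t₁ < ⋯ < t_M` in `[0,1]` with `g(t_{2i}) = p`
and `g(t_{2i+1}) = q`. -/
def oscGE (q : HE) (g : I → HE) (M : ℕ) : Prop :=
  ∃ t : Fin (M + 1) → I, StrictMono t ∧ ∀ i : Fin (M + 1),
    ((i : ℕ) % 2 = 0 → g (t i) = hep) ∧ ((i : ℕ) % 2 = 1 → g (t i) = q)

/-- The oscillation number of a based loop, an element of `ℕ ∪ {∞}`. -/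
def osc (q : HE) (g : I → HE) : ℕ∞ :=
  ⨆ (M : ℕ) (_ : oscGE q g M), (M : ℕ∞)

/-- The topological fundamental group: path components of the based loop space
(with the uniform-convergence = compact-open topology), with the quotient topology. -/
def Pi1Top (X : Type*) [TopologicalSpace X] (p : X) : Type _ :=
  Quotient (pathSetoid (Path p p))

instance (X : Type*) [TopologicalSpace X] (p : X) : TopologicalSpace (Pi1Top X p) :=
  instTopologicalSpaceQuotient

/-- The canonical surjection `Π : C_p(X) → π₁^top(X,p)`. -/
def Pr {X : Type*} [TopologicalSpace X] {p : X} (γ : Path p p) : Pi1Top X p :=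
  Quotient.mk _ γ


instance : FirstCountableTopology (Path hep hep) :=
  (Topology.IsInducing.induced ((↑) : Path hep hep → C(I, HE))).firstCountableTopology

theorem stmt11 (f : ℕ → Path hep hep)
    (hcl : ∀ n, IsClosed {δ : Path hep hep | Joined (f n) δ})
    (hns : ∀ g : ℕ → Path hep hep, (∀ n, Joined (f n) (g n)) →
      ¬ ∃ (φ : ℕ → ℕ) (l : Path hep hep), StrictMono φ ∧ Tendsto (g ∘ φ) atTop (𝓝 l)) :
    IsClosed (⋃ n, {δ : Path hep hep | Joined (f n) δ}) ∧
      IsClosed {x : Pi1Top HE hep | ∃ n, x = Pr (f n)} := by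
  have hU : IsClosed (⋃ n, {δ : Path hep hep | Joined (f n) δ}) := by
    apply IsSeqClosed.isClosed
    intro δ l hmem hlim
    choose n hn using fun k => Set.mem_iUnion.1 (hmem k)
    by_cases hfin : ∃ m, {k | n k = m}.Infinite
    · obtain ⟨m, hm⟩ := hfin
      obtain ⟨ψ, hψ, hψm⟩ := extraction_of_frequently_atTop
        (Nat.frequently_atTop_iff_infinite.2 hm)
      refine Set.mem_iUnion.2 ⟨m, (hcl m).mem_of_tendsto
        (hlim.comp hψ.tendsto_atTop) (Eventually.of_forall fun k => ?_)⟩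
      have := hn (ψ k); rw [hψm k] at this; exact this
    · push_neg at hfin
      classical
      have htop : Tendsto n atTop atTop := by
        apply tendsto_atTop.2
        intro M
        rw [← Nat.cofinite_eq_atTop]
        have : {k | ¬ M ≤ n k} ⊆ ⋃ m ∈ Finset.range M, {k | n k = m} := by
          intro k hk
          simp only [Set.mem_setOf_eq, not_le] at hk
          exact Set.mem_biUnion (Finset.mem_range.2 hk) rfl
        have hfin2 : {k | ¬ M ≤ n k}.Finite :=
          Set.Finite.subset (Set.Finite.biUnion (Finset.range M).finite_toSet
            fun m _ => hfin m) this
        exact eventually_cofinite.2 hfin2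
      obtain ⟨ψ, hψ, hnψ⟩ := strictMono_subseq_of_tendsto_atTop htop
      set g : ℕ → Path hep hep := fun m =>
        if h : ∃ j, n (ψ j) = m then δ (ψ h.choose) else f m with hg
      have hgj : ∀ m, Joined (f m) (g m) := by
        intro m
        by_cases h : ∃ j, n (ψ j) = m
        · rw [show g m = δ (ψ h.choose) from dif_pos h]
          have := hn (ψ h.choose); rw [h.choose_spec] at this; exact this
        · rw [show g m = f m from dif_neg h]
      exfalso
      apply hns g hgj
      refine ⟨n ∘ ψ, l, hnψ, ?_⟩
      have : g ∘ (n ∘ ψ) = δ ∘ ψ := by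
        funext j
        have hex : ∃ j', n (ψ j') = n (ψ j) := ⟨j, rfl⟩
        have := hex.choose_spec
        have hj : hex.choose = j := hnψ.injective this
        calc (g ∘ (n ∘ ψ)) j = δ (ψ hex.choose) := dif_pos hex
          _ = (δ ∘ ψ) j := by rw [hj]; rfl
      rw [this]
      exact hlim.comp hψ.tendsto_atTop
  refine ⟨hU, ?_⟩
  have hq : Topology.IsQuotientMap (Quotient.mk (pathSetoid (Path hep hep))) :=
    isQuotientMap_quot_mk
  refine hq.isClosed_preimage.1 ?_
  convert hU using 1
  ext δ
  simp only [Set.mem_preimage, Set.mem_setOf_eq, Set.mem_iUnion, Pr]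
  exact exists_congr fun m =>
    ⟨fun h => Joined.symm (Quotient.exact h), fun h => Quotient.sound h.symm⟩

end
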